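/- Let p > 3 be a prime, m a positive integer, and n = 2m, and suppose p^m ≡ 2 (mod 3). For every nonzero c ∈ F_{p^n} such that c̄^2 - c̄·c + c^2 = 0 (where c̄ = c^{p^m}), the element -2c̄ + c is a square in F_{p^n}. -/
import Mathlib


/-- Let `p > 3` be prime, `n = 2m`, `p^m ≡ 2 (mod 3)`. For every nonzero `c` in `F_{p^n}`
with `c̄² - c̄·c + c² = 0` (where `c̄ = c^(p^m)`), the element `-2c̄ + c` is a square
in `F_{p^n}`. -/
theorem stmt14 (p : ℕ) (hp : p.Prime) (hp3 : 3 < p) (m : ℕ) (hm : 0 < m) (n : ℕ)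
    (hn : n = 2 * m) (hmod : p ^ m % 3 = 2)
    (F : Type*) [Field F] [Fintype F]
    (hF : Fintype.card F = p ^ n) :
    ∀ c : F, c ≠ 0 → (c ^ p ^ m) ^ 2 - c ^ p ^ m * c + c ^ 2 = 0 →
      ∃ y : F, y ^ 2 = -2 * c ^ p ^ m + c := by
  intro c hc h
  haveI hfp : Fact p.Prime := ⟨hp⟩
  set q : ℕ := p ^ m with hqdef
  have hcard : Fintype.card F = q ^ 2 := by
    rw [hF, hn, mul_comm, pow_mul]
  -- characteristic is p
  have hcharP : CharP F p := by
    set ℓ := ringChar F with hl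
    haveI : CharP F ℓ := ringChar.charP F
    obtain ⟨d, hℓp, hcd⟩ := FiniteField.card F ℓ
    have hdvd : ℓ ∣ p ^ n := by
      rw [← hF, hcd]
      exact dvd_pow_self ℓ d.ne_zero
    have : ℓ = p := (Nat.prime_dvd_prime_iff_eq hℓp hp).mp (hℓp.dvd_of_dvd_pow hdvd)
    rw [← this]
    exact ringChar.charP F
  haveI := hcharP
  have hchar2 : ringChar F ≠ 2 := by
    have : ringChar F = p := ringChar.eq F p
    omega
  have h3 : (3 : F) ≠ 0 := by
    intro h0
    have h0' : ((3 : ℕ) : F) = 0 := by exact_mod_cast h0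
    have := Nat.le_of_dvd (by norm_num) ((CharP.cast_eq_zero_iff F p 3).mp h0')
    omega
  -- arithmetic facts about q
  have hq2 : q % 2 = 1 := by
    have hpodd : p % 2 = 1 := Nat.odd_iff.mp (hp.odd_of_ne_two (by omega))
    rw [hqdef, Nat.pow_mod, hpodd, one_pow]
    norm_num
  have hqodd : Odd q := Nat.odd_iff.mpr hq2
  have hq5 : 5 ≤ q := by
    have : p ≤ q := Nat.le_self_pow hm.ne' p
    omega
  obtain ⟨a, ha⟩ : ∃ a, q = 2 * a + 1 := ⟨(q - 1) / 2, by omega⟩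
  obtain ⟨b, hb⟩ : ∃ b, q + 1 = 6 * b := ⟨(q + 1) / 6, by omega⟩
  have hab : Odd (a + b) := by
    rw [Nat.odd_iff]; omega
  -- Frobenius basics
  have h2q : (2 : F) ^ q = 2 := by
    have : ((1 : F) + 1) ^ q = 1 ^ q + 1 ^ q := by rw [hqdef, add_pow_char_pow]
    norm_num at this
    exact this
  set cb : F := c ^ q with hcb
  have hcb0 : cb ≠ 0 := pow_ne_zero _ hc
  have hcbq : cb ^ q = c := by
    rw [hcb, ← pow_mul, ← pow_two, ← hcard, FiniteField.pow_card]
  set z : F := -2 * cb + c with hz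
  -- z ≠ 0
  have hz0 : z ≠ 0 := by
    intro h0
    have hc2 : c = 2 * cb := by rw [hz] at h0; linear_combination h0
    rw [hc2] at h
    have h3cb : (3 : F) * cb ^ 2 = 0 := by linear_combination h
    rcases mul_eq_zero.mp h3cb with h' | h'
    · exact h3 h'
    · exact hcb0 (pow_eq_zero_iff (by norm_num) |>.mp h')
  -- z ^ q
  have hzq : z ^ q = -2 * c + cb := by
    have hfrob : z ^ q = (-2 * cb) ^ q + c ^ q := by
      rw [hz, hqdef, add_pow_char_pow]
    have h2q' : (-2 : F) ^ q = -2 := by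
      rw [hqodd.neg_pow, h2q]
    rw [hfrob, mul_pow, h2q', hcbq, ← hcb]
  -- z ^ (q + 1) = 3 * (c * cb)
  have hz1 : z ^ (q + 1) = 3 * (c * cb) := by
    rw [pow_succ, hzq, hz]
    linear_combination (-2 : F) * h
  -- x := c ^ (q - 1)
  set x : F := c ^ (q - 1) with hx
  have hx0 : x ≠ 0 := pow_ne_zero _ hc
  have hcbx : cb = x * c := by
    rw [hcb, hx, ← pow_succ]
    congr 1
    omega
  have hxeq : x ^ 2 - x + 1 = 0 := by
    have hc2 : c ^ 2 ≠ 0 := pow_ne_zero _ hc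
    have : c ^ 2 * (x ^ 2 - x + 1) = 0 := by
      rw [hcbx] at h; linear_combination h
    exact (mul_eq_zero.mp this).resolve_left hc2
  have hx3 : x ^ 3 = -1 := by linear_combination (x + 1) * hxeq
  -- w := 2 * cb - c, w ^ 2 = -3 * c ^ 2
  set w : F := 2 * cb - c with hw
  have hw2 : w ^ 2 = -3 * c ^ 2 := by
    rw [hw]; linear_combination (4 : F) * h
  have hw0 : w ≠ 0 := by
    intro h0
    rw [h0] at hw2
    have : (3 : F) * c ^ 2 = 0 := by linear_combination hw2
    rcases mul_eq_zero.mp this with h' | h'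
    · exact h3 h'
    · exact hc (pow_eq_zero_iff (by norm_num) |>.mp h')
  have hwq : w ^ q = -(w * x) := by
    have hwqv : w ^ q = 2 * c - cb := by
      have hfrob : (2 * cb + (- c)) ^ q = (2 * cb) ^ q + (-c) ^ q := by
        rw [hqdef, add_pow_char_pow]
      rw [hw, sub_eq_add_neg, hfrob, mul_pow, h2q, hqodd.neg_pow, ← sub_eq_add_neg,
        hcbq, ← hcb]
    rw [hwqv, hw, hcbx]
    linear_combination 2 * c * hxeq
  -- (-3) ^ a = -1
  have hm3 : (-3 : F) ^ a = -1 := by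
    have hq1 : q - 1 + 1 = q := by omega
    have hwq1 : w ^ (q - 1) * w = -(w * x) := by
      rw [← pow_succ, hq1, hwq]
    have hwx : w ^ (q - 1) = -x :=
      mul_right_cancel₀ hw0 (by rw [hwq1]; ring : w ^ (q - 1) * w = -x * w)
    have h2a : w ^ (q - 1) = (-3 : F) ^ a * x := by
      have hqa : q - 1 = 2 * a := by omega
      rw [hqa, pow_mul, hw2, mul_pow, ← pow_mul, ← hqa, ← hx]
    have heq : (-3 : F) ^ a * x = -1 * x := by rw [← h2a, hwx]; ring
    have := mul_right_cancel₀ hx0 heq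
    simpa using this
  -- exponent bookkeeping
  have hN : Fintype.card F / 2 = (q + 1) * a := by
    have : q ^ 2 = 2 * ((q + 1) * a) + 1 := by rw [ha]; ring
    rw [hcard]; omega
  have hN' : (q + 1) * a = (q - 1) * (3 * b) := by
    have h1 : q - 1 = 2 * a := by omega
    calc (q + 1) * a = 6 * b * a := by rw [hb]
    _ = 2 * a * (3 * b) := by ring
    _ = (q - 1) * (3 * b) := by rw [h1]
  have hcN : c ^ ((q + 1) * a) = (-1 : F) ^ b := by
    rw [hN', pow_mul, ← hx, pow_mul, hx3]
  have hccb : (c * cb) ^ a = (-1 : F) ^ b := by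
    rw [hcb, ← pow_succ', ← pow_mul]
    exact hcN
  have h3a : (3 : F) ^ a = -(-1 : F) ^ a := by
    have hma : ((-1 : F) * 3) ^ a = -1 := by
      rw [show ((-1 : F) * 3) = -3 by ring, hm3]
    have h1 : ((-1 : F) ^ a) * ((-1 : F) ^ a * 3 ^ a) = ((-1 : F) ^ a) * -1 := by
      rw [← mul_pow, hma]
    have hsq : ((-1 : F) ^ a) * ((-1 : F) ^ a) = 1 := by
      rw [← mul_pow]; norm_num
    calc (3 : F) ^ a = ((-1 : F) ^ a * (-1 : F) ^ a) * 3 ^ a := by rw [hsq, one_mul]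
    _ = (-1 : F) ^ a * ((-1 : F) ^ a * 3 ^ a) := by ring
    _ = (-1 : F) ^ a * -1 := h1
    _ = -(-1 : F) ^ a := by ring
  have hzN : z ^ (Fintype.card F / 2) = 1 := by
    rw [hN, pow_mul, hz1, mul_pow, hccb, h3a, neg_mul, ← pow_add, hab.neg_one_pow]
    norm_num
  -- conclude
  obtain ⟨y, hy⟩ := (FiniteField.isSquare_iff hchar2 hz0).mpr hzN
  exact ⟨y, by rw [pow_two, ← hy, hz]⟩
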